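/- For k ∈ ℕ with k ≥ 1 write k = 2^{a₁} + ⋯ + 2^{a_{#k}} with a₁ > ⋯ > a_{#k} ≥ 0, where #k is the number of ones in the binary expansion of k. Then: ∫₀¹ x · wal_k(x) dx equals 1/2 if k = 0, −2^{−a₁−2} if #k = 1, and 0 if #k ≥ 2; ∫₀¹ x² · wal_k(x) dx equals 1/3 if k = 0, −2^{−a₁−2} if #k = 1, 2^{−a₁−a₂−3} if #k = 2, and 0 if #k ≥ 3; and ∫₀¹ x³ · wal_k(x) dx equals 1/4 if k = 0, −2^{−a₁−2} + 2^{−3a₁−5} if #k = 1, 3 · 2^{−a₁−a₂−4} if #k = 2, −3 · 2^{−a₁−a₂−a₃−5} if #k = 3, and 0 if #k ≥ 4. -/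

import Mathlib

open MeasureTheory intervalIntegral

noncomputable def binDigit (ℓ : ℕ) (x : ℝ) : ℕ := (⌊(2 : ℝ) ^ ℓ * x⌋).toNat % 2

noncomputable def walsh (k : ℕ) (x : ℝ) : ℝ :=
  (-1 : ℝ) ^ (∑ ℓ ∈ Finset.range (k + 1), (k / 2 ^ ℓ % 2) * binDigit (ℓ + 1) x)

lemma walsh_zero (x : ℝ) : walsh 0 x = 1 := by simp [walsh]

lemma measurable_binDigit (ℓ : ℕ) : Measurable (binDigit ℓ) := by
  unfold binDigit
  exact Measurable.comp (g := fun n : ℤ => n.toNat % 2)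
    measurable_from_top (Int.measurable_floor.comp (measurable_id.const_mul _))

lemma measurable_walsh (k : ℕ) : Measurable (walsh k) := by
  unfold walsh
  exact Measurable.comp (g := fun n : ℕ => (-1:ℝ)^n) measurable_from_top
    (Finset.measurable_sum _ (fun ℓ _ => (measurable_binDigit (ℓ+1)).const_mul _))

lemma walsh_norm (k : ℕ) (x : ℝ) : ‖walsh k x‖ ≤ 1 := by
  unfold walsh
  rw [norm_pow, norm_neg, norm_one, one_pow]

lemma intervalIntegrable_walsh_comp (k : ℕ) (c d a b : ℝ) :
    IntervalIntegrable (fun x => walsh k (c * x + d)) MeasureTheory.volume a b := by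
  apply IntervalIntegrable.mono_fun (_root_.intervalIntegrable_const (c := (1:ℝ)))
  · exact ((measurable_walsh k).comp ((measurable_id.const_mul c).add_const d)).aestronglyMeasurable
  · exact Filter.Eventually.of_forall (fun x => by simpa using walsh_norm k _)

lemma intervalIntegrable_mul_walsh {f : ℝ → ℝ} (hf : Continuous f) (k : ℕ) (a b : ℝ) :
    IntervalIntegrable (fun x => f x * walsh k x) MeasureTheory.volume a b := by
  have h := intervalIntegrable_walsh_comp k 1 0 a b
  simp only [one_mul, add_zero] at h
  exact h.continuousOn_mul hf.continuousOn

lemma binDigit_shift (ℓ : ℕ) (hℓ : 1 ≤ ℓ) {x : ℝ} (hx : 0 ≤ x) :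
    binDigit ℓ (Int.fract (2 * x)) = binDigit (ℓ + 1) x := by
  unfold binDigit
  have hB : (0:ℤ) ≤ ⌊2 * x⌋ := Int.floor_nonneg.2 (by linarith)
  have hA : (0:ℤ) ≤ ⌊(2:ℝ) ^ (ℓ+1) * x⌋ := Int.floor_nonneg.2 (by positivity)
  have hfl : ⌊(2:ℝ) ^ ℓ * Int.fract (2 * x)⌋ = ⌊(2:ℝ) ^ (ℓ+1) * x⌋ - 2 ^ ℓ * ⌊2 * x⌋ := by
    rw [Int.fract]
    have : (2:ℝ) ^ ℓ * (2 * x - ⌊2 * x⌋) = (2:ℝ) ^ (ℓ+1) * x - (((2:ℕ) ^ ℓ * ⌊2 * x⌋ : ℤ) : ℝ) := by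
      push_cast; ring
    rw [this, Int.floor_sub_intCast]
    push_cast; ring
  rw [hfl]
  have hnn : (0:ℤ) ≤ ⌊(2:ℝ) ^ (ℓ+1) * x⌋ - 2 ^ ℓ * ⌊2 * x⌋ := by
    rw [← hfl]; exact Int.floor_nonneg.2 (mul_nonneg (by positivity) (Int.fract_nonneg _))
  obtain ⟨c, hc⟩ : ∃ c : ℤ, (2:ℤ) ^ ℓ * ⌊2 * x⌋ = 2 * c := by
    refine ⟨2 ^ (ℓ - 1) * ⌊2 * x⌋, ?_⟩
    rw [← mul_assoc, ← pow_succ']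
    congr 2
    omega
  rw [hc] at hnn ⊢
  omega

lemma digit_sum_ext (j N M : ℕ) (hN : j < N) (hM : j < M) (d : ℕ → ℕ) :
    ∑ ℓ ∈ Finset.range N, (j / 2 ^ ℓ % 2) * d ℓ = ∑ ℓ ∈ Finset.range M, (j / 2 ^ ℓ % 2) * d ℓ := by
  have key : ∀ {P Q : ℕ}, j < P → P ≤ Q →
      ∑ ℓ ∈ Finset.range Q, (j / 2 ^ ℓ % 2) * d ℓ = ∑ ℓ ∈ Finset.range P, (j / 2 ^ ℓ % 2) * d ℓ := by
    intro P Q hP hPQ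
    symm
    apply Finset.sum_subset (Finset.range_subset_range.2 hPQ)
    intro ℓ _ hℓ
    simp only [Finset.mem_range, not_lt] at hℓ
    have : j < 2 ^ ℓ := lt_of_lt_of_le (Nat.lt_two_pow_self (n := j)) (Nat.pow_le_pow_right (by norm_num) (by omega))
    rw [Nat.div_eq_of_lt this]
    simp
  rcases le_total N M with h | h
  · rw [key hN h]
  · rw [key hM h]

-- recursion, lower half
lemma walsh_left {x : ℝ} (hx0 : 0 ≤ x) (hx1 : x < 1/2) (k : ℕ) :
    walsh k x = walsh (k / 2) (2 * x) := by
  rcases Nat.eq_zero_or_pos k with rfl | hk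
  · simp [walsh]
  unfold walsh
  congr 1
  have hfr : Int.fract (2 * x) = 2 * x := Int.fract_eq_self.2 ⟨by linarith, by linarith⟩
  rw [Finset.sum_range_succ']
  have h0 : k / 2 ^ 0 % 2 * binDigit (0 + 1) x = 0 := by
    have h1 : ⌊(2:ℝ) * x⌋ = 0 := by
      rw [Int.floor_eq_zero_iff]
      constructor
      · simpa using by linarith
      · simpa using by linarith
    simp [binDigit, pow_one, h1]
  rw [h0, add_zero]
  have hstep : ∀ ℓ, k / 2 ^ (ℓ + 1) % 2 * binDigit (ℓ + 1 + 1) x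
      = (k / 2) / 2 ^ ℓ % 2 * binDigit (ℓ + 1) (2 * x) := by
    intro ℓ
    rw [Nat.div_div_eq_div_mul, ← pow_succ', ← hfr, binDigit_shift (ℓ + 1) (by omega) hx0]
  simp only [hstep]
  exact digit_sum_ext (k / 2) k (k / 2 + 1) (by omega) (by omega) _

-- recursion, upper half
lemma walsh_right {x : ℝ} (hx0 : 1/2 ≤ x) (hx1 : x < 1) (k : ℕ) :
    walsh k x = (-1 : ℝ) ^ (k % 2) * walsh (k / 2) (2 * x - 1) := by
  rcases Nat.eq_zero_or_pos k with rfl | hk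
  · simp [walsh]
  unfold walsh
  rw [← pow_add]
  congr 1
  have hfr : Int.fract (2 * x) = 2 * x - 1 := by
    have : Int.fract (2 * x) = Int.fract (2 * x - 1) := by
      rw [show (2*x - 1 : ℝ) = 2*x + (-1 : ℤ) by push_cast; ring, Int.fract_add_intCast]
    rw [this, Int.fract_eq_self.2 ⟨by linarith, by linarith⟩]
  rw [Finset.sum_range_succ']
  have h0 : k / 2 ^ 0 % 2 * binDigit (0 + 1) x = k % 2 := by
    have h1 : ⌊(2:ℝ) * x⌋ = 1 := by
      rw [Int.floor_eq_iff]
      push_cast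
      constructor <;> linarith
    simp [binDigit, pow_one, h1]
  rw [h0]
  have hstep : ∀ ℓ, k / 2 ^ (ℓ + 1) % 2 * binDigit (ℓ + 1 + 1) x
      = (k / 2) / 2 ^ ℓ % 2 * binDigit (ℓ + 1) (2 * x - 1) := by
    intro ℓ
    rw [Nat.div_div_eq_div_mul, ← pow_succ', ← hfr, binDigit_shift (ℓ + 1) (by omega) (by linarith)]
  simp only [hstep]
  rw [add_comm]
  congr 1
  exact digit_sum_ext (k / 2) k (k / 2 + 1) (by omega) (by omega) _

open MeasureTheory intervalIntegral


lemma ae_ne (c : ℝ) : ∀ᵐ x : ℝ ∂volume, x ≠ c := by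
  rw [MeasureTheory.ae_iff]
  simpa using MeasureTheory.measure_singleton c

lemma walsh_split (f : ℝ → ℝ) (hf : Continuous f) (k : ℕ) :
    (∫ x in (0:ℝ)..1, f x * walsh k x) =
      2⁻¹ * (∫ y in (0:ℝ)..1, f (y / 2) * walsh (k / 2) y)
      + (-1 : ℝ) ^ (k % 2) * 2⁻¹ * (∫ y in (0:ℝ)..1, f ((1 + y) / 2) * walsh (k / 2) y) := by
  have hsplit := intervalIntegral.integral_add_adjacent_intervals
    (intervalIntegrable_mul_walsh hf k 0 2⁻¹) (intervalIntegrable_mul_walsh hf k 2⁻¹ 1)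
  have hL : (∫ x in (0:ℝ)..2⁻¹, f x * walsh k x)
      = ∫ x in (0:ℝ)..2⁻¹, (fun y => f (y / 2) * walsh (k / 2) y) (2 * x) := by
    apply intervalIntegral.integral_congr_ae
    filter_upwards [ae_ne 2⁻¹] with x hx hmem
    rw [Set.uIoc_of_le (by norm_num : (0:ℝ) ≤ 2⁻¹)] at hmem
    have hx1 : x < 1/2 := by
      rcases hmem with ⟨_, h2⟩
      have : x ≠ 2⁻¹ := hx
      rw [show (1:ℝ)/2 = 2⁻¹ by norm_num]
      exact lt_of_le_of_ne h2 hx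
    rw [walsh_left (le_of_lt hmem.1) hx1 k]
    norm_num
  have hR : (∫ x in (2⁻¹:ℝ)..1, f x * walsh k x)
      = ∫ x in (2⁻¹:ℝ)..1, (-1:ℝ)^(k%2) * ((fun y => f ((1 + y) / 2) * walsh (k / 2) y) (2 * x - 1)) := by
    apply intervalIntegral.integral_congr_ae
    filter_upwards [ae_ne 1] with x hx hmem
    rw [Set.uIoc_of_le (by norm_num : (2⁻¹:ℝ) ≤ 1)] at hmem
    have hx1 : x < 1 := lt_of_le_of_ne hmem.2 hx
    rw [walsh_right (by linarith [hmem.1]) hx1 k]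
    have : (1 + (2 * x - 1)) / 2 = x := by ring
    rw [this]
    ring
  have e1 := intervalIntegral.integral_comp_mul_left (a := (0:ℝ)) (b := 2⁻¹)
    (fun y => f (y / 2) * walsh (k / 2) y) (two_ne_zero (α := ℝ))
  have e2 := intervalIntegral.integral_comp_mul_sub (a := (2⁻¹:ℝ)) (b := 1)
    (fun y => f ((1 + y) / 2) * walsh (k / 2) y) (two_ne_zero (α := ℝ)) 1
  rw [hR, intervalIntegral.integral_const_mul] at hsplit
  norm_num at e1 e2 hL hsplit
  rw [← hsplit, hL, e1, e2]
  ring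

open MeasureTheory intervalIntegral


noncomputable def J (m k : ℕ) : ℝ := ∫ x in (0:ℝ)..1, x ^ m * walsh k x

lemma int_poly (j : ℕ) (c0 c1 c2 c3 : ℝ) :
    (∫ y in (0:ℝ)..1, (c0 + c1*y + c2*y^2 + c3*y^3) * walsh j y)
      = c0 * J 0 j + c1 * J 1 j + c2 * J 2 j + c3 * J 3 j := by
  have I : ∀ i : ℕ, IntervalIntegrable (fun y => y ^ i * walsh j y) volume 0 1 :=
    fun i => intervalIntegrable_mul_walsh (continuous_pow i) j 0 1
  have step : (∫ y in (0:ℝ)..1, (c0 + c1*y + c2*y^2 + c3*y^3) * walsh j y)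
      = ∫ y in (0:ℝ)..1, (c0 * (y^0 * walsh j y) + c1 * (y^1 * walsh j y))
          + (c2 * (y^2 * walsh j y) + c3 * (y^3 * walsh j y)) :=
    intervalIntegral.integral_congr (fun y _ => by ring)
  rw [step, intervalIntegral.integral_add (((I 0).const_mul c0).add ((I 1).const_mul c1))
      (((I 2).const_mul c2).add ((I 3).const_mul c3)),
    intervalIntegral.integral_add ((I 0).const_mul c0) ((I 1).const_mul c1),
    intervalIntegral.integral_add ((I 2).const_mul c2) ((I 3).const_mul c3),
    intervalIntegral.integral_const_mul, intervalIntegral.integral_const_mul,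
    intervalIntegral.integral_const_mul, intervalIntegral.integral_const_mul]
  unfold J
  ring

lemma ip (j : ℕ) (g : ℝ → ℝ) (c0 c1 c2 c3 : ℝ) (hg : ∀ y, g y = c0 + c1*y + c2*y^2 + c3*y^3) :
    (∫ y in (0:ℝ)..1, g y * walsh j y) = c0 * J 0 j + c1 * J 1 j + c2 * J 2 j + c3 * J 3 j := by
  rw [intervalIntegral.integral_congr (g := fun y => (c0 + c1*y + c2*y^2 + c3*y^3) * walsh j y)
    (fun y _ => by rw [hg]), int_poly]

lemma J0_rec (k : ℕ) : J 0 k = 2⁻¹ * J 0 (k/2) + (-1:ℝ)^(k%2) * 2⁻¹ * J 0 (k/2) := by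
  unfold J
  rw [walsh_split (fun x => x ^ 0) (continuous_pow 0) k,
    ip (k/2) (fun y => (y/2)^0) 1 0 0 0 (fun y => by ring),
    ip (k/2) (fun y => ((1+y)/2)^0) 1 0 0 0 (fun y => by ring)]
  simp only [J]
  ring

lemma J1_rec (k : ℕ) : J 1 k = 4⁻¹ * J 1 (k/2)
    + (-1:ℝ)^(k%2) * (4⁻¹ * J 0 (k/2) + 4⁻¹ * J 1 (k/2)) := by
  unfold J
  rw [walsh_split (fun x => x ^ 1) (continuous_pow 1) k,
    ip (k/2) (fun y => (y/2)^1) 0 2⁻¹ 0 0 (fun y => by ring),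
    ip (k/2) (fun y => ((1+y)/2)^1) 2⁻¹ 2⁻¹ 0 0 (fun y => by ring)]
  simp only [J]
  ring

lemma J2_rec (k : ℕ) : J 2 k = 8⁻¹ * J 2 (k/2)
    + (-1:ℝ)^(k%2) * (8⁻¹ * J 0 (k/2) + 4⁻¹ * J 1 (k/2) + 8⁻¹ * J 2 (k/2)) := by
  unfold J
  rw [walsh_split (fun x => x ^ 2) (continuous_pow 2) k,
    ip (k/2) (fun y => (y/2)^2) 0 0 4⁻¹ 0 (fun y => by ring),
    ip (k/2) (fun y => ((1+y)/2)^2) 4⁻¹ 2⁻¹ 4⁻¹ 0 (fun y => by ring)]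
  simp only [J]
  ring

lemma J3_rec (k : ℕ) : J 3 k = 16⁻¹ * J 3 (k/2)
    + (-1:ℝ)^(k%2) * (16⁻¹ * J 0 (k/2) + (3/16) * J 1 (k/2) + (3/16) * J 2 (k/2) + 16⁻¹ * J 3 (k/2)) := by
  unfold J
  rw [walsh_split (fun x => x ^ 3) (continuous_pow 3) k,
    ip (k/2) (fun y => (y/2)^3) 0 0 0 8⁻¹ (fun y => by ring),
    ip (k/2) (fun y => ((1+y)/2)^3) 8⁻¹ (3/8) (3/8) 8⁻¹ (fun y => by ring)]
  simp only [J]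
  ring

lemma J_zero (m : ℕ) : J m 0 = 1 / (m + 1) := by
  unfold J
  rw [intervalIntegral.integral_congr (g := fun x => x ^ m)
    (fun x _ => by rw [walsh_zero, mul_one]), integral_pow]
  simp

set_option maxHeartbeats 1000000 in
lemma main_ind (k : ℕ) : ∀ (L : ℕ) (a : ℕ → ℕ), (∀ i j, i < j → j < L → a j < a i) →
    k = ∑ i ∈ Finset.range L, 2 ^ a i →
    (J 0 k = if L = 0 then 1 else 0) ∧
    (J 1 k = if L = 0 then 1/2 else if L = 1 then -(2:ℝ) ^ (-(a 0 : ℤ) - 2) else 0) ∧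
    (J 2 k = if L = 0 then 1/3 else if L = 1 then -(2:ℝ) ^ (-(a 0 : ℤ) - 2)
      else if L = 2 then (2:ℝ) ^ (-(a 0 : ℤ) - (a 1 : ℤ) - 3) else 0) ∧
    (J 3 k = if L = 0 then 1/4
      else if L = 1 then -(2:ℝ) ^ (-(a 0 : ℤ) - 2) + (2:ℝ) ^ (-3 * (a 0 : ℤ) - 5)
      else if L = 2 then 3 * (2:ℝ) ^ (-(a 0 : ℤ) - (a 1 : ℤ) - 4)
      else if L = 3 then -3 * (2:ℝ) ^ (-(a 0 : ℤ) - (a 1 : ℤ) - (a 2 : ℤ) - 5)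
      else 0) := by
  induction k using Nat.strong_induction_on with
  | _ k IH =>
  intro L a ha hk
  rcases Nat.eq_zero_or_pos k with rfl | hkpos
  · have hL : L = 0 := by
      by_contra h
      have h0 : (0:ℕ) ∈ Finset.range L := Finset.mem_range.2 (Nat.pos_of_ne_zero h)
      have h1 : 2 ^ a 0 ≤ ∑ i ∈ Finset.range L, 2 ^ a i := by
        simpa using Finset.single_le_sum (f := fun i => 2 ^ a i) (fun i _ => Nat.zero_le _) h0
      have h2 : 1 ≤ 2 ^ a 0 := Nat.one_le_two_pow
      omega
    subst hL
    norm_num [J_zero]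
  -- k positive
  have hL : L ≠ 0 := by
    rintro rfl
    simp at hk
    omega
  obtain ⟨M, rfl⟩ : ∃ M, L = M + 1 := ⟨L - 1, by omega⟩
  have hkM : k = (∑ i ∈ Finset.range M, 2 ^ a i) + 2 ^ a M := by
    rw [hk, Finset.sum_range_succ]
  have hdvd : 2 ∣ ∑ i ∈ Finset.range M, 2 ^ a i := by
    apply Finset.dvd_sum
    intro i hi
    exact dvd_pow_self 2 (by have := ha i M (Finset.mem_range.1 hi) (Nat.lt_succ_self M); omega)
  have hapos : ∀ i, i < M → 1 ≤ a i := by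
    intro i hi
    have := ha i M hi (Nat.lt_succ_self M)
    omega
  rcases Nat.eq_zero_or_pos (a M) with haM | haM
  · -- odd case
    have hodd : k % 2 = 1 := by
      obtain ⟨c, hc⟩ := hdvd
      rw [haM, pow_zero] at hkM
      omega
    have hsum2 : (∑ i ∈ Finset.range M, 2 ^ a i) = 2 * ∑ i ∈ Finset.range M, 2 ^ (a i - 1) := by
      rw [Finset.mul_sum]
      apply Finset.sum_congr rfl
      intro i hi
      have h1 := hapos i (Finset.mem_range.1 hi)
      rw [← pow_succ']
      congr 1
      omega
    have hj : k / 2 = ∑ i ∈ Finset.range M, 2 ^ (a i - 1) := by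
      rw [haM, pow_zero] at hkM
      omega
    have hdec : ∀ i j, i < j → j < M → (fun i => a i - 1) j < (fun i => a i - 1) i := by
      intro i j hij hjM
      have h1 := ha i j hij (by omega)
      have h2 := hapos j hjM
      simp only
      omega
    obtain ⟨ih0, ih1, ih2, ih3⟩ := IH (k / 2) (by omega) M (fun i => a i - 1) hdec hj
    rw [J0_rec k, J1_rec k, J2_rec k, J3_rec k, hodd, ih0, ih1, ih2, ih3, pow_one]
    clear ih0 ih1 ih2 ih3 IH hk hdvd hkM hsum2 hj hdec ha hodd
    match M, haM with
    | 0, haM =>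
      norm_num [haM]
    | 1, haM =>
      have h1 : 1 ≤ a 0 := hapos 0 (by omega)
      norm_num [haM]
      push_cast [Nat.cast_sub h1]
      constructor <;>
      first
        | (simp only [mul_sub, mul_one, sub_eq_add_neg, neg_add_rev, neg_neg,
             zpow_add₀ (two_ne_zero (α := ℝ)), zpow_neg, zpow_one]
           norm_num [zpow_add₀ (two_ne_zero (α := ℝ)), zpow_neg, zpow_one]
           try ring
           try exact ⟨trivial, trivial⟩)
    | 2, haM =>
      have h1 : 1 ≤ a 0 := hapos 0 (by omega)
      have h2 : 1 ≤ a 1 := hapos 1 (by omega)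
      norm_num [haM]
      push_cast [Nat.cast_sub h1, Nat.cast_sub h2]
      first
        | (simp only [mul_sub, mul_one, sub_eq_add_neg, neg_add_rev, neg_neg,
             zpow_add₀ (two_ne_zero (α := ℝ)), zpow_neg, zpow_one]
           norm_num [zpow_add₀ (two_ne_zero (α := ℝ)), zpow_neg, zpow_one]
           try ring
           try exact ⟨trivial, trivial⟩)
    | (N + 3), haM =>
      have e0 : N + 3 ≠ 0 := by omega
      have e1 : N + 3 ≠ 1 := by omega
      have e2 : N + 3 ≠ 2 := by omega
      have f1 : N + 3 + 1 ≠ 1 := by omega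
      have f2 : N + 3 + 1 ≠ 2 := by omega
      have f3 : N + 3 + 1 ≠ 3 := by omega
      norm_num [e0, e1, e2, f1, f2, f3]
      by_cases hN : N = 0 <;> simp [hN]
  · -- even case
    have heven : k % 2 = 0 := by
      obtain ⟨c, hc⟩ := hdvd
      have h2 : 2 ∣ 2 ^ a M := dvd_pow_self 2 (by omega)
      obtain ⟨d, hd⟩ := h2
      omega
    have hapos' : ∀ i, i < M + 1 → 1 ≤ a i := by
      intro i hi
      rcases Nat.lt_succ_iff_lt_or_eq.1 hi with h | h
      · exact hapos i h
      · rw [h]; omega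
    have hsum2 : k = 2 * ∑ i ∈ Finset.range (M+1), 2 ^ (a i - 1) := by
      rw [hk, Finset.mul_sum]
      apply Finset.sum_congr rfl
      intro i hi
      have h1 : 1 ≤ a i := hapos' i (Finset.mem_range.1 hi)
      rw [← pow_succ']
      congr 1
      omega
    have hj : k / 2 = ∑ i ∈ Finset.range (M+1), 2 ^ (a i - 1) := by
      omega
    have hdec : ∀ i j, i < j → j < M + 1 → (fun i => a i - 1) j < (fun i => a i - 1) i := by
      intro i j hij hjM
      have h1 := ha i j hij hjM
      have h2 := hapos' j hjM
      simp only
      omega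
    obtain ⟨ih0, ih1, ih2, ih3⟩ := IH (k / 2) (by omega) (M+1) (fun i => a i - 1) hdec hj
    rw [J0_rec k, J1_rec k, J2_rec k, J3_rec k, heven, ih0, ih1, ih2, ih3, pow_zero]
    have h1 : 1 ≤ a 0 := hapos' 0 (by omega)
    clear ih0 ih1 ih2 ih3 IH hk hdvd hkM hsum2 hj hdec ha heven
    match M with
    | 0 =>
      norm_num
      push_cast [Nat.cast_sub h1]
      refine ⟨?_, ?_, ?_⟩
      · first
        | (simp only [mul_sub, mul_one, sub_eq_add_neg, neg_add_rev, neg_neg,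
             zpow_add₀ (two_ne_zero (α := ℝ)), zpow_neg, zpow_one]
           norm_num [zpow_add₀ (two_ne_zero (α := ℝ)), zpow_neg, zpow_one]
           try ring
           try exact ⟨trivial, trivial⟩)
      · first
        | (simp only [mul_sub, mul_one, sub_eq_add_neg, neg_add_rev, neg_neg,
             zpow_add₀ (two_ne_zero (α := ℝ)), zpow_neg, zpow_one]
           norm_num [zpow_add₀ (two_ne_zero (α := ℝ)), zpow_neg, zpow_one]
           try ring
           try exact ⟨trivial, trivial⟩)
      · rw [show (-((a 0:ℤ) - 1) - 2) = (-(a 0:ℤ) - 2) + 1 by ring,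
          show (-(3 * ((a 0:ℤ) - 1)) - 5) = (-(3 * (a 0:ℤ)) - 5) + 3 by ring,
          zpow_add₀ (two_ne_zero (α := ℝ)), zpow_add₀ (two_ne_zero (α := ℝ))]
        norm_num
        ring
    | 1 =>
      have h2 : 1 ≤ a 1 := hapos' 1 (by omega)
      norm_num
      push_cast [Nat.cast_sub h1, Nat.cast_sub h2]
      first
        | (simp only [mul_sub, mul_one, sub_eq_add_neg, neg_add_rev, neg_neg,
             zpow_add₀ (two_ne_zero (α := ℝ)), zpow_neg, zpow_one]
           norm_num [zpow_add₀ (two_ne_zero (α := ℝ)), zpow_neg, zpow_one]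
           try ring
           try exact ⟨trivial, trivial⟩)
    | 2 =>
      have h2 : 1 ≤ a 1 := hapos' 1 (by omega)
      have h3 : 1 ≤ a 2 := hapos' 2 (by omega)
      norm_num
      push_cast [Nat.cast_sub h1, Nat.cast_sub h2, Nat.cast_sub h3]
      first
        | (simp only [mul_sub, mul_one, sub_eq_add_neg, neg_add_rev, neg_neg,
             zpow_add₀ (two_ne_zero (α := ℝ)), zpow_neg, zpow_one]
           norm_num [zpow_add₀ (two_ne_zero (α := ℝ)), zpow_neg, zpow_one]
           try ring
           try exact ⟨trivial, trivial⟩)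
    | (N+3) =>
      have e1 : N + 3 + 1 ≠ 1 := by omega
      have e2 : N + 3 + 1 ≠ 2 := by omega
      have e3 : N + 3 + 1 ≠ 3 := by omega
      norm_num [e1, e2, e3]

theorem stmt_10 (L : ℕ) (a : ℕ → ℕ) (ha : ∀ i j, i < j → j < L → a j < a i)
    (k : ℕ) (hk : k = ∑ i ∈ Finset.range L, 2 ^ a i) :
    ((∫ x in (0 : ℝ)..1, x * walsh k x) =
      if L = 0 then 1 / 2
      else if L = 1 then -(2 : ℝ) ^ (-(a 0 : ℤ) - 2)
      else 0) ∧
    ((∫ x in (0 : ℝ)..1, x ^ 2 * walsh k x) =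
      if L = 0 then 1 / 3
      else if L = 1 then -(2 : ℝ) ^ (-(a 0 : ℤ) - 2)
      else if L = 2 then (2 : ℝ) ^ (-(a 0 : ℤ) - (a 1 : ℤ) - 3)
      else 0) ∧
    ((∫ x in (0 : ℝ)..1, x ^ 3 * walsh k x) =
      if L = 0 then 1 / 4
      else if L = 1 then -(2 : ℝ) ^ (-(a 0 : ℤ) - 2) + (2 : ℝ) ^ (-3 * (a 0 : ℤ) - 5)
      else if L = 2 then 3 * (2 : ℝ) ^ (-(a 0 : ℤ) - (a 1 : ℤ) - 4)
      else if L = 3 then -3 * (2 : ℝ) ^ (-(a 0 : ℤ) - (a 1 : ℤ) - (a 2 : ℤ) - 5)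
      else 0) := by
  obtain ⟨h0, h1, h2, h3⟩ := main_ind k L a ha hk
  have e : (∫ x in (0 : ℝ)..1, x * walsh k x) = J 1 k := by
    unfold J
    exact intervalIntegral.integral_congr (fun x _ => by rw [pow_one])
  exact ⟨e ▸ h1, h2, h3⟩
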